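/- For all real numbers a, b, exponents p > 1, β ≥ 1, and M > 0, setting C(β,p) = (p/(β+p-1))^p and (a⁻)_M = min{a⁻, M} with a⁻ = -min{a,0}, one has |a-b|^{p-2}(a-b)·(((b⁻)_M)^β - ((a⁻)_M)^β) ≥ C(β,p)·|((a⁻)_M)^{(β+p-1)/p} - ((b⁻)_M)^{(β+p-1)/p}|^p. -/

import Mathlib

open Real

lemma step1 {A B q : ℝ} (hA : 0 ≤ A) (hAB : A ≤ B) (hq : 1 ≤ q) :
    B ^ q - A ^ q ≤ q * B ^ (q - 1) * (B - A) := by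
  rcases eq_or_lt_of_le (hA.trans hAB) with h | hB
  · have hB0 : B = 0 := h.symm
    have hA0 : A = 0 := le_antisymm (hB0 ▸ hAB) hA
    simp [hA0, hB0, Real.zero_rpow (by positivity : q ≠ 0)]
  · set t := A / B with ht
    have ht0 : 0 ≤ t := div_nonneg hA hB.le
    have hber := one_add_mul_self_le_rpow_one_add (s := t - 1) (by linarith) hq
    rw [show 1 + (t - 1) = t by ring] at hber
    have htq : t ^ q = A ^ q / B ^ q := Real.div_rpow hA hB.le q
    have hBq : (0:ℝ) < B ^ q := Real.rpow_pos_of_pos hB q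
    have hBq1 : B ^ (q - 1) = B ^ q / B := by
      rw [Real.rpow_sub hB, Real.rpow_one]
    have hstep := mul_le_mul_of_nonneg_left hber hBq.le
    rw [htq, mul_div_cancel₀ _ hBq.ne'] at hstep
    have key : B ^ q * t = A * B ^ (q - 1) := by
      rw [hBq1, ht]; field_simp
    have hBqB : B ^ (q - 1) * B = B ^ q := by
      rw [hBq1]; field_simp
    nlinarith [hstep, key, hBqB]

lemma step2 {A B β : ℝ} (hA : 0 ≤ A) (hAB : A ≤ B) (hβ : 1 ≤ β) :
    B ^ (β - 1) * (B - A) ≤ B ^ β - A ^ β := by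
  have hB : 0 ≤ B := hA.trans hAB
  have h1 : A ^ β ≤ A * B ^ (β - 1) := by
    rcases eq_or_lt_of_le hA with h | hA'
    · simp [← h, Real.zero_rpow (by positivity : β ≠ 0)]
    · have : A ^ β = A * A ^ (β - 1) := by
        rw [show β = 1 + (β - 1) by ring, Real.rpow_add hA', Real.rpow_one]; ring_nf
      rw [this]
      exact mul_le_mul_of_nonneg_left (Real.rpow_le_rpow hA hAB (by linarith)) hA'.le
  have h2 : B ^ β = B * B ^ (β - 1) := by
    rcases eq_or_lt_of_le hB with h | hB'
    · simp [← h, Real.zero_rpow (by positivity : β ≠ 0)]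
    · rw [show β = 1 + (β - 1) by ring, Real.rpow_add hB', Real.rpow_one]; ring_nf
  nlinarith

lemma core {A B p β : ℝ} (hp : 1 < p) (hβ : 1 ≤ β) (hA : 0 ≤ A) (hAB : A ≤ B) :
    (p / (β + p - 1)) ^ p * (B ^ ((β + p - 1) / p) - A ^ ((β + p - 1) / p)) ^ p ≤
      (B - A) ^ (p - 1) * (B ^ β - A ^ β) := by
  have hB : 0 ≤ B := hA.trans hAB
  have hp0 : (0:ℝ) < p := by linarith
  have hden : (0:ℝ) < β + p - 1 := by linarith
  set q := (β + p - 1) / p with hqdef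
  have hq1 : 1 ≤ q := (one_le_div hp0).mpr (by linarith)
  have hq0 : 0 < q := by linarith
  have hD : 0 ≤ B ^ q - A ^ q := sub_nonneg.mpr (Real.rpow_le_rpow hA hAB hq0.le)
  have h1 : B ^ q - A ^ q ≤ q * B ^ (q - 1) * (B - A) := step1 hA hAB hq1
  have hqm : q - 1 = (β - 1) / p := by
    rw [hqdef, eq_div_iff hp0.ne', sub_mul, div_mul_cancel₀ _ hp0.ne']; ring
  have h2 : (1 / q) * (B ^ q - A ^ q) ≤ (B - A) * B ^ ((β - 1) / p) := by
    rw [← hqm]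
    rw [div_mul_eq_mul_div, div_le_iff₀ hq0]
    nlinarith
  have hLnn : 0 ≤ (1 / q) * (B ^ q - A ^ q) := by positivity
  have h3 := Real.rpow_le_rpow hLnn h2 hp0.le
  rw [Real.mul_rpow (by positivity) hD, Real.mul_rpow (by linarith) (by positivity),
    ← Real.rpow_mul hB, div_mul_cancel₀ _ hp0.ne'] at h3
  have hpow : (B - A) ^ p = (B - A) ^ (p - 1) * (B - A) := by
    rw [show p = (p - 1) + 1 by ring, Real.rpow_add' (by linarith) (by norm_num; linarith),
      Real.rpow_one]
    ring_nf
  have hq' : 1 / q = p / (β + p - 1) := by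
    rw [hqdef, one_div_div]
  rw [hq', hpow, mul_assoc] at h3
  refine h3.trans (mul_le_mul_of_nonneg_left ?_ (Real.rpow_nonneg (by linarith) _))
  have := step2 hA hAB hβ
  linarith [step2 hA hAB hβ, mul_comm (B - A) (B ^ (β - 1))]

lemma lip {a b M : ℝ} (hba : b ≤ a) :
    min (-min a 0) M ≤ min (-min b 0) M ∧
      min (-min b 0) M - min (-min a 0) M ≤ a - b := by
  constructor <;> (simp only [min_def]; split_ifs <;> linarith)

lemma main_half (a b p β M : ℝ) (hp : 1 < p) (hβ : 1 ≤ β) (hM : 0 < M) (hba : b < a) :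
    (p / (β + p - 1)) ^ p *
      |(min (-min a 0) M) ^ ((β + p - 1) / p) - (min (-min b 0) M) ^ ((β + p - 1) / p)| ^ p ≤
    |a - b| ^ (p - 2) * (a - b) * ((min (-min b 0) M) ^ β - (min (-min a 0) M) ^ β) := by
  set A := min (-min a 0) M with hAdef
  set B := min (-min b 0) M with hBdef
  have hA : 0 ≤ A := le_min (neg_nonneg.mpr (min_le_right a 0)) hM.le
  obtain ⟨hAB, hd⟩ := lip hba.le (M := M)
  have hq0 : (0:ℝ) < (β + p - 1) / p := div_pos (by linarith) (by linarith)
  have habs : |A ^ ((β + p - 1) / p) - B ^ ((β + p - 1) / p)|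
      = B ^ ((β + p - 1) / p) - A ^ ((β + p - 1) / p) := by
    rw [abs_sub_comm, abs_of_nonneg (sub_nonneg.mpr (Real.rpow_le_rpow hA hAB hq0.le))]
  have hab : (0:ℝ) < a - b := sub_pos.mpr hba
  have hrhs : |a - b| ^ (p - 2) * (a - b) = (a - b) ^ (p - 1) := by
    rw [abs_of_pos hab, show p - 1 = (p - 2) + 1 by ring, Real.rpow_add hab, Real.rpow_one]
  rw [habs, hrhs]
  refine (core hp hβ hA hAB).trans ?_
  have hβnn : 0 ≤ B ^ β - A ^ β := sub_nonneg.mpr (Real.rpow_le_rpow hA hAB (by linarith))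
  exact mul_le_mul_of_nonneg_right
    (Real.rpow_le_rpow (by linarith) (by linarith) (by linarith)) hβnn



/-- Inequality (i4): truncated negative part version at level `M > 0`. -/
theorem stmt3 (a b p β M : ℝ) (hp : 1 < p) (hβ : 1 ≤ β) (hM : 0 < M) :
    (p / (β + p - 1)) ^ p *
      |(min (-min a 0) M) ^ ((β + p - 1) / p) - (min (-min b 0) M) ^ ((β + p - 1) / p)| ^ p ≤
    |a - b| ^ (p - 2) * (a - b) * ((min (-min b 0) M) ^ β - (min (-min a 0) M) ^ β) := by
  rcases lt_trichotomy a b with h | h | h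
  · have key := main_half b a p β M hp hβ hM h
    rw [abs_sub_comm b a,
      abs_sub_comm ((min (-min b 0) M) ^ ((β + p - 1) / p))
        ((min (-min a 0) M) ^ ((β + p - 1) / p))] at key
    have heq : |a - b| ^ (p - 2) * (a - b) *
        ((min (-min b 0) M) ^ β - (min (-min a 0) M) ^ β)
        = |a - b| ^ (p - 2) * (b - a) *
        ((min (-min a 0) M) ^ β - (min (-min b 0) M) ^ β) := by ring
    rw [heq]
    exact key
  · subst h
    simp [Real.zero_rpow (show p ≠ 0 by positivity)]
  · exact main_half a b p β M hp hβ hM h
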